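/- Colbeck–Renner equiprobability theorem for a pair of qubits. Let (Λ, Σ) be a measurable space and μ a probability measure on it. Suppose given, for each pair (a, b) of orthonormal bases a = (a₀, a₁) and b = (b₀, b₁) of EuclideanSpace ℂ (Fin 2), measurable functions P_{a,b}(j,k) : Λ → ℝ for j, k ∈ Fin 2, with P_{a,b}(j,k)(λ) ≥ 0 and Σ_{j,k} P_{a,b}(j,k)(λ) = 1 for every λ, such that: (parameter independence) for all bases a, b, b', all j and all λ, Σ_k P_{a,b}(j,k)(λ) = Σ_k P_{a,b'}(j,k)(λ), and for all bases a, a', b, all k and all λ, Σ_j P_{a,b}(j,k)(λ) = Σ_j P_{a',b}(j,k)(λ); and (reproduces the quantum predictions for the maximally entangled state) for all a, b, j, k, ∫ P_{a,b}(j,k) dμ = (1/2)·‖a_j(0)·b_k(0) + a_j(1)·b_k(1)‖². Then there exists a measurable set Ω with μ(Ω) = 1 such that for every λ ∈ Ω, every orthonormal basis b, and every j ∈ Fin 2, Σ_k P_{z,b}(j,k)(λ) = 1/2, where z = (z₀, z₁) is the standard orthonormal basis of EuclideanSpace ℂ (Fin 2). -/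

import Mathlib

open MeasureTheory Real

noncomputable def qv (θ : ℝ) : Fin 2 → EuclideanSpace ℂ (Fin 2) :=
  fun j => WithLp.toLp 2 fun m => if j = 0 then (if m = 0 then (cos θ : ℂ) else (sin θ : ℂ))
             else (if m = 0 then (-sin θ : ℂ) else (cos θ : ℂ))

lemma qv_on (θ : ℝ) : Orthonormal ℂ (qv θ) := by
  have h := sin_sq_add_cos_sq θ
  rw [orthonormal_iff_ite]
  intro i j
  fin_cases i <;> fin_cases j <;>
    simp only [PiLp.inner_apply, Fin.sum_univ_two, qv, PiLp.toLp_apply, RCLike.inner_apply, Fin.isValue,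
      reduceIte, Fin.zero_eta, Fin.mk_one, one_ne_zero, if_false, Complex.conj_ofReal,
      map_neg, if_true] <;>
    · push_cast [← Complex.ofReal_mul, ← Complex.ofReal_add]
      norm_cast
      nlinarith [h]

lemma qv_zero : qv 0 = fun i => EuclideanSpace.single i (1:ℂ) := by
  funext i; ext m
  fin_cases i <;> fin_cases m <;> simp [qv, EuclideanSpace.single_apply]

lemma qb00 (θ φ : ℝ) : ‖qv θ 0 0 * qv φ 0 0 + qv θ 0 1 * qv φ 0 1‖^2 = cos (θ - φ)^2 := by
  simp only [qv, PiLp.toLp_apply, reduceIte, Fin.isValue, one_ne_zero, if_false, ← Complex.ofReal_neg,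
    ← Complex.ofReal_mul, ← Complex.ofReal_add, Complex.norm_real, Real.norm_eq_abs, sq_abs]
  rw [← cos_sub]

lemma qb01 (θ φ : ℝ) : ‖qv θ 0 0 * qv φ 1 0 + qv θ 0 1 * qv φ 1 1‖^2 = sin (θ - φ)^2 := by
  simp only [qv, PiLp.toLp_apply, reduceIte, Fin.isValue, one_ne_zero, if_false, ← Complex.ofReal_neg,
    ← Complex.ofReal_mul, ← Complex.ofReal_add, Complex.norm_real, Real.norm_eq_abs, sq_abs]
  rw [show cos θ * -sin φ + sin θ * cos φ = sin (θ - φ) by rw [sin_sub]; ring]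

lemma qb10 (θ φ : ℝ) : ‖qv θ 1 0 * qv φ 0 0 + qv θ 1 1 * qv φ 0 1‖^2 = sin (θ - φ)^2 := by
  simp only [qv, PiLp.toLp_apply, reduceIte, Fin.isValue, one_ne_zero, if_false, ← Complex.ofReal_neg,
    ← Complex.ofReal_mul, ← Complex.ofReal_add, Complex.norm_real, Real.norm_eq_abs, sq_abs]
  rw [show -sin θ * cos φ + cos θ * sin φ = -sin (θ - φ) by rw [sin_sub]; ring, neg_sq]

lemma qb11 (θ φ : ℝ) : ‖qv θ 1 0 * qv φ 1 0 + qv θ 1 1 * qv φ 1 1‖^2 = cos (θ - φ)^2 := by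
  simp only [qv, PiLp.toLp_apply, reduceIte, Fin.isValue, one_ne_zero, if_false, ← Complex.ofReal_neg,
    ← Complex.ofReal_mul, ← Complex.ofReal_add, Complex.norm_real, Real.norm_eq_abs, sq_abs]
  rw [show -sin θ * -sin φ + cos θ * cos φ = cos (θ - φ) by rw [cos_sub]; ring]

theorem stmt15 {Λ : Type*} [MeasurableSpace Λ]
    (μ : Measure Λ) [IsProbabilityMeasure μ]
    (P : (Fin 2 → EuclideanSpace ℂ (Fin 2)) → (Fin 2 → EuclideanSpace ℂ (Fin 2)) →
      Fin 2 → Fin 2 → Λ → ℝ)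
    (hmeas : ∀ a b, Orthonormal ℂ a → Orthonormal ℂ b → ∀ j k, Measurable (P a b j k))
    (hnonneg : ∀ a b, Orthonormal ℂ a → Orthonormal ℂ b → ∀ j k l, 0 ≤ P a b j k l)
    (hsum : ∀ a b, Orthonormal ℂ a → Orthonormal ℂ b → ∀ l, ∑ j, ∑ k, P a b j k l = 1)
    (hPIA : ∀ a b b', Orthonormal ℂ a → Orthonormal ℂ b → Orthonormal ℂ b' →
      ∀ j l, ∑ k, P a b j k l = ∑ k, P a b' j k l)
    (hPIB : ∀ a a' b, Orthonormal ℂ a → Orthonormal ℂ a' → Orthonormal ℂ b →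
      ∀ k l, ∑ j, P a b j k l = ∑ j, P a' b j k l)
    (hborn : ∀ a b, Orthonormal ℂ a → Orthonormal ℂ b → ∀ j k,
      ∫ l, P a b j k l ∂μ = (1 / 2) * ‖a j 0 * b k 0 + a j 1 * b k 1‖ ^ 2) :
    ∃ Ω : Set Λ, MeasurableSet Ω ∧ μ Ω = 1 ∧
      ∀ l ∈ Ω, ∀ b, Orthonormal ℂ b → ∀ j : Fin 2,
        ∑ k, P (fun i => EuclideanSpace.single i (1 : ℂ)) b j k l = 1 / 2 := by
  classical
  have hon := qv_on
  -- P ≤ 1 pointwise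
  have hle1 : ∀ θ φ j k l, P (qv θ) (qv φ) j k l ≤ 1 := by
    intro θ φ j k l
    have h1 := hsum _ _ (hon θ) (hon φ) l
    have h2 : P (qv θ) (qv φ) j k l ≤ ∑ k', P (qv θ) (qv φ) j k' l :=
      Finset.single_le_sum (fun k' _ => hnonneg _ _ (hon θ) (hon φ) j k' l) (Finset.mem_univ k)
    have h3 : ∑ k', P (qv θ) (qv φ) j k' l ≤ ∑ j', ∑ k', P (qv θ) (qv φ) j' k' l :=
      Finset.single_le_sum
        (fun j' _ => Finset.sum_nonneg fun k' _ => hnonneg _ _ (hon θ) (hon φ) j' k' l)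
        (Finset.mem_univ j)
    linarith
  have hPint : ∀ θ φ j k, Integrable (P (qv θ) (qv φ) j k) μ := by
    intro θ φ j k
    refine (integrable_const (1:ℝ)).mono'
      ((hmeas _ _ (hon θ) (hon φ) j k).aestronglyMeasurable) (ae_of_all _ fun l => ?_)
    rw [Real.norm_eq_abs, abs_le]
    exact ⟨by linarith [hnonneg _ _ (hon θ) (hon φ) j k l], hle1 θ φ j k l⟩
  -- marginal functions
  set A : ℝ → Fin 2 → Λ → ℝ := fun θ j l => ∑ k, P (qv θ) (qv 0) j k l with hAdef
  set B : ℝ → Fin 2 → Λ → ℝ := fun φ k l => ∑ j, P (qv 0) (qv φ) j k l with hBdef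
  have hAeq : ∀ θ φ j l, A θ j l = ∑ k, P (qv θ) (qv φ) j k l := by
    intro θ φ j l
    simp only [hAdef]
    exact hPIA _ _ _ (hon θ) (hon 0) (hon φ) j l
  have hBeq : ∀ θ φ k l, B φ k l = ∑ j, P (qv θ) (qv φ) j k l := by
    intro θ φ k l
    simp only [hBdef]
    exact hPIB _ _ _ (hon 0) (hon θ) (hon φ) k l
  have hAint : ∀ θ j, Integrable (A θ j) μ := by
    intro θ j
    simp only [hAdef]
    exact integrable_finset_sum _ fun k _ => hPint θ 0 j k
  have hBint : ∀ φ k, Integrable (B φ k) μ := by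
    intro φ k
    simp only [hBdef]
    exact integrable_finset_sum _ fun j _ => hPint 0 φ j k
  -- the chain step bound
  have hstep : ∀ θ φ, ∫ l, |A θ 0 l - B φ 0 l| ∂μ ≤ sin (θ - φ) ^ 2 := by
    intro θ φ
    have hpt : ∀ l, |A θ 0 l - B φ 0 l| ≤ P (qv θ) (qv φ) 0 1 l + P (qv θ) (qv φ) 1 0 l := by
      intro l
      have h1 := hAeq θ φ 0 l
      have h2 := hBeq θ φ 0 l
      rw [Fin.sum_univ_two] at h1 h2
      have n1 := hnonneg _ _ (hon θ) (hon φ) 0 1 l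
      have n2 := hnonneg _ _ (hon θ) (hon φ) 1 0 l
      rw [abs_le]
      constructor <;> linarith
    have hint : Integrable (fun l => |A θ 0 l - B φ 0 l|) μ := ((hAint θ 0).sub (hBint φ 0)).abs
    have hmono := integral_mono hint ((hPint θ φ 0 1).add (hPint θ φ 1 0)) hpt
    simp only [Pi.add_apply] at hmono
    rw [integral_add (hPint θ φ 0 1) (hPint θ φ 1 0), hborn _ _ (hon θ) (hon φ) 0 1,
      hborn _ _ (hon θ) (hon φ) 1 0, qb01, qb10] at hmono
    linarith
  -- the final link bound
  have hfin : ∀ φ, ∫ l, |B φ 0 l - A 0 1 l| ∂μ ≤ cos φ ^ 2 := by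
    intro φ
    have hpt : ∀ l, |B φ 0 l - A 0 1 l| ≤ P (qv 0) (qv φ) 0 0 l + P (qv 0) (qv φ) 1 1 l := by
      intro l
      have h1 := hAeq 0 φ 1 l
      have h2 := hBeq 0 φ 0 l
      rw [Fin.sum_univ_two] at h1 h2
      have n1 := hnonneg _ _ (hon 0) (hon φ) 0 0 l
      have n2 := hnonneg _ _ (hon 0) (hon φ) 1 1 l
      rw [abs_le]
      constructor <;> linarith
    have hint : Integrable (fun l => |B φ 0 l - A 0 1 l|) μ := ((hBint φ 0).sub (hAint 0 1)).abs
    have hmono := integral_mono hint ((hPint 0 φ 0 0).add (hPint 0 φ 1 1)) hpt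
    simp only [Pi.add_apply] at hmono
    rw [integral_add (hPint 0 φ 0 0) (hPint 0 φ 1 1), hborn _ _ (hon 0) (hon φ) 0 0,
      hborn _ _ (hon 0) (hon φ) 1 1, qb00, qb11] at hmono
    have : cos ((0:ℝ) - φ) ^ 2 = cos φ ^ 2 := by rw [zero_sub, cos_neg]
    linarith [this ▸ hmono]
  -- the chain
  have chain : ∀ n : ℕ, ∫ l, |A 0 0 l - A 0 1 l| ∂μ
      ≤ (2 * (n:ℝ) + 2) * sin (π / (4 * ((n:ℝ) + 1))) ^ 2 := by
    intro n
    set δ : ℝ := π / (4 * ((n:ℝ) + 1)) with hδ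
    set g : ℕ → Λ → ℝ := fun i => if Even i then A (i * δ) 0 else B (i * δ) 0 with hg
    have hgint : ∀ i, Integrable (g i) μ := by
      intro i
      by_cases h : Even i <;> simp only [hg, h, if_true, if_false]
      exacts [hAint _ 0, hBint _ 0]
    have hghd : ∀ i, ∫ l, |g i l - g (i + 1) l| ∂μ ≤ sin δ ^ 2 := by
      intro i
      by_cases h : Even i
      · have h' : ¬ Even (i + 1) := by simp [Nat.even_add_one, h]
        simp only [hg, h, h', if_true, if_false]
        have harg : ((i:ℝ) * δ) - ((i + 1 : ℕ):ℝ) * δ = -δ := by push_cast; ring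
        have := hstep ((i:ℝ) * δ) (((i + 1 : ℕ):ℝ) * δ)
        rwa [harg, sin_neg, neg_sq] at this
      · have h' : Even (i + 1) := Nat.even_add_one.mpr h
        simp only [hg, h, h', if_true, if_false]
        have hcomm : (fun l => |B ((i:ℝ) * δ) 0 l - A (((i + 1 : ℕ):ℝ) * δ) 0 l|)
            = fun l => |A (((i + 1 : ℕ):ℝ) * δ) 0 l - B ((i:ℝ) * δ) 0 l| := by
          funext l; exact abs_sub_comm _ _
        rw [hcomm]
        have harg : (((i + 1 : ℕ):ℝ) * δ) - (i:ℝ) * δ = δ := by push_cast; ring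
        have := hstep (((i + 1 : ℕ):ℝ) * δ) ((i:ℝ) * δ)
        rwa [harg] at this
    have hchain : ∀ i : ℕ, ∫ l, |g 0 l - g i l| ∂μ ≤ (i:ℝ) * sin δ ^ 2 := by
      intro i
      induction i with
      | zero => simp
      | succ i ih =>
        have hpt : ∀ l, |g 0 l - g (i + 1) l| ≤ |g 0 l - g i l| + |g i l - g (i + 1) l| :=
          fun l => abs_sub_le _ _ _
        have hint1 : Integrable (fun l => |g 0 l - g (i + 1) l|) μ :=
          ((hgint 0).sub (hgint (i + 1))).abs
        have hint2 : Integrable (fun l => |g 0 l - g i l|) μ := ((hgint 0).sub (hgint i)).abs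
        have hint3 : Integrable (fun l => |g i l - g (i + 1) l|) μ :=
          ((hgint i).sub (hgint (i + 1))).abs
        have hmono := integral_mono hint1 (hint2.add hint3) hpt
        simp only [Pi.add_apply] at hmono
        rw [integral_add hint2 hint3] at hmono
        have := hghd i
        push_cast
        linarith
    -- assemble
    have hg0 : g 0 = A 0 0 := by
      simp only [hg, Even.zero, if_true, Nat.cast_zero, zero_mul]
    have hglast : g (2 * n + 1) = B (((2 * n + 1 : ℕ):ℝ) * δ) 0 := by
      have : ¬ Even (2 * n + 1) := by simp [Nat.even_add_one]
      simp only [hg, this, if_false]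
    have hcoslast : cos (((2 * n + 1 : ℕ):ℝ) * δ) ^ 2 = sin δ ^ 2 := by
      have harg : ((2 * n + 1 : ℕ):ℝ) * δ = π / 2 - δ := by
        rw [hδ]; push_cast; field_simp; ring
      rw [harg, cos_pi_div_two_sub]
    have hpt : ∀ l, |A 0 0 l - A 0 1 l|
        ≤ |g 0 l - g (2 * n + 1) l| + |g (2 * n + 1) l - A 0 1 l| := by
      intro l
      have := abs_sub_le (A 0 0 l) (g (2 * n + 1) l) (A 0 1 l)
      rw [hg0]
      linarith [this]
    have hint1 : Integrable (fun l => |A 0 0 l - A 0 1 l|) μ := ((hAint 0 0).sub (hAint 0 1)).abs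
    have hint2 : Integrable (fun l => |g 0 l - g (2 * n + 1) l|) μ :=
      ((hgint 0).sub (hgint (2 * n + 1))).abs
    have hint3 : Integrable (fun l => |g (2 * n + 1) l - A 0 1 l|) μ :=
      ((hgint (2 * n + 1)).sub (hAint 0 1)).abs
    have hmono := integral_mono hint1 (hint2.add hint3) hpt
    simp only [Pi.add_apply] at hmono
    rw [integral_add hint2 hint3] at hmono
    have h1 := hchain (2 * n + 1)
    have h2 : ∫ l, |g (2 * n + 1) l - A 0 1 l| ∂μ ≤ sin δ ^ 2 := by
      rw [hglast]
      calc ∫ l, |B (((2 * n + 1 : ℕ):ℝ) * δ) 0 l - A 0 1 l| ∂μ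
          ≤ cos (((2 * n + 1 : ℕ):ℝ) * δ) ^ 2 := hfin _
        _ = sin δ ^ 2 := hcoslast
    push_cast at h1
    linarith
  -- take the limit
  have hI0 : ∫ l, |A 0 0 l - A 0 1 l| ∂μ = 0 := by
    have hIle : ∀ n : ℕ, ∫ l, |A 0 0 l - A 0 1 l| ∂μ ≤ (π ^ 2 / 8) / ((n:ℝ) + 1) := by
      intro n
      have hδpos : (0:ℝ) ≤ π / (4 * ((n:ℝ) + 1)) := by positivity
      have hsle : sin (π / (4 * ((n:ℝ) + 1))) ≤ π / (4 * ((n:ℝ) + 1)) := Real.sin_le hδpos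
      have hsnn : 0 ≤ sin (π / (4 * ((n:ℝ) + 1))) := by
        apply sin_nonneg_of_nonneg_of_le_pi hδpos
        have h1 : (1:ℝ) ≤ 4 * ((n:ℝ) + 1) := by
          have : (0:ℝ) ≤ (n:ℝ) := Nat.cast_nonneg n
          linarith
        calc π / (4 * ((n:ℝ) + 1)) ≤ π / 1 := by
              apply div_le_div_of_nonneg_left pi_pos.le (by linarith) h1
          _ = π := div_one π
      have hsq : sin (π / (4 * ((n:ℝ) + 1))) ^ 2 ≤ (π / (4 * ((n:ℝ) + 1))) ^ 2 :=
        pow_le_pow_left₀ hsnn hsle 2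
      have := chain n
      have hnpos : (0:ℝ) < (n:ℝ) + 1 := by positivity
      have hkey : (2 * (n:ℝ) + 2) * (π / (4 * ((n:ℝ) + 1))) ^ 2 = (π ^ 2 / 8) / ((n:ℝ) + 1) := by
        field_simp
        ring
      calc ∫ l, |A 0 0 l - A 0 1 l| ∂μ
          ≤ (2 * (n:ℝ) + 2) * sin (π / (4 * ((n:ℝ) + 1))) ^ 2 := this
        _ ≤ (2 * (n:ℝ) + 2) * (π / (4 * ((n:ℝ) + 1))) ^ 2 := by
            apply mul_le_mul_of_nonneg_left hsq (by linarith [hnpos])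
        _ = (π ^ 2 / 8) / ((n:ℝ) + 1) := hkey
    have htend : Filter.Tendsto (fun n : ℕ => (π ^ 2 / 8) / ((n:ℝ) + 1))
        Filter.atTop (nhds 0) := by
      have h2 := (tendsto_const_div_atTop_nhds_zero_nat (π ^ 2 / 8)).comp
        (Filter.tendsto_add_atTop_nat 1)
      have heq : (fun n : ℕ => (π ^ 2 / 8) / ((n:ℝ) + 1))
          = (fun n : ℕ => (π ^ 2 / 8) / (((n + 1 : ℕ)):ℝ)) := by
        funext n; push_cast; ring_nf
      rw [heq]
      exact h2
    have hle0 : ∫ l, |A 0 0 l - A 0 1 l| ∂μ ≤ 0 := ge_of_tendsto' htend hIle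
    have hge0 : 0 ≤ ∫ l, |A 0 0 l - A 0 1 l| ∂μ :=
      integral_nonneg fun l => abs_nonneg _
    linarith
  -- a.e. equality
  have hae : ∀ᵐ l ∂μ, A 0 0 l = 1 / 2 := by
    have h1 : (fun l => |A 0 0 l - A 0 1 l|) =ᵐ[μ] 0 :=
      (integral_eq_zero_iff_of_nonneg (fun l => abs_nonneg _)
        ((hAint 0 0).sub (hAint 0 1)).abs).mp hI0
    filter_upwards [h1] with l hl
    have heq : A 0 0 l = A 0 1 l := by
      have : |A 0 0 l - A 0 1 l| = 0 := hl
      have := abs_eq_zero.mp this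
      linarith
    have hsum1 : A 0 0 l + A 0 1 l = 1 := by
      have := hsum _ _ (hon 0) (hon 0) l
      rw [Fin.sum_univ_two] at this
      simp only [hAdef]
      exact this
    linarith
  -- conclude
  have hAm : Measurable (A 0 0) := by
    simp only [hAdef]
    exact Finset.measurable_sum _ fun k _ => hmeas _ _ (hon 0) (hon 0) 0 k
  refine ⟨A 0 0 ⁻¹' {1 / 2}, hAm (measurableSet_singleton (1/2 : ℝ)), ?_, ?_⟩
  · rw [← prob_compl_eq_zero_iff (hAm (measurableSet_singleton (1/2 : ℝ)))]
    rw [ae_iff] at hae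
    convert hae using 2
    rfl
  · intro l hl b hb j
    have hz : Orthonormal ℂ (fun i => EuclideanSpace.single i (1:ℂ)) := qv_zero ▸ hon 0
    have h1 : ∑ k, P (fun i => EuclideanSpace.single i (1:ℂ)) b j k l
        = ∑ k, P (fun i => EuclideanSpace.single i (1:ℂ)) (qv 0) j k l :=
      hPIA _ _ _ hz hb (hon 0) j l
    rw [h1, ← qv_zero]
    have hmem : A 0 0 l = 1 / 2 := hl
    have hsum1 : A 0 0 l + A 0 1 l = 1 := by
      have := hsum _ _ (hon 0) (hon 0) l
      rw [Fin.sum_univ_two] at this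
      simp only [hAdef]
      exact this
    have hAj : (∑ k, P (qv 0) (qv 0) j k l) = A 0 j l := by simp only [hAdef]
    rw [hAj]
    have h0 : A 0 0 l = 1 / 2 := hmem
    have h1' : A 0 1 l = 1 / 2 := by linarith
    fin_cases j
    · exact h0
    · exact h1'
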